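/- Let X be a path connected Polish space and x ∈ X. Then the set of loops l ∈ L_x such that for some positive integer n the path-homotopy class [l]ⁿ lies in the commutator subgroup [π₁(X,x), π₁(X,x)] is an analytic subset of the loop space L_x. (This set is the loop set of the kernel of the natural map π₁(X,x) → Ab(X)/tor(Ab(X)).) -/

import Mathlib

open CategoryTheory
open scoped Cardinal unitInterval

attribute [local instance] Path.Homotopic.setoid

/-- The path-homotopy class of a loop `l` based at `x`, as an element of the
fundamental group `π₁(X, x)`. -/
noncomputable def pathClass {X : Type u} [TopologicalSpace X] {x : X} (l : Path x x) :
    FundamentalGroup X x :=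
  FundamentalGroup.fromPath (⟦l⟧ : Path.Homotopic.Quotient x x)

/-! ### Auxiliary topological facts -/

section Topology

variable {X : Type} [TopologicalSpace X] [PolishSpace X]

instance Stmt13Aux.polishCI {x y : X} : PolishSpace (Path x y) := by
  letI := TopologicalSpace.upgradeIsCompletelyMetrizable X
  have h : Topology.IsClosedEmbedding ((↑) : Path x y → C(I, X)) := by
    constructor
    · exact ⟨⟨rfl⟩, fun a b hab => by
        ext t; exact congrFun (congrArg DFunLike.coe hab) t⟩
    · have : Set.range ((↑) : Path x y → C(I, X)) =
          {f : C(I, X) | f 0 = x ∧ f 1 = y} := by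
        ext f
        constructor
        · rintro ⟨p, rfl⟩; exact ⟨p.source, p.target⟩
        · rintro ⟨h0, h1⟩; exact ⟨⟨f, h0, h1⟩, rfl⟩
      rw [this]
      exact (isClosed_eq (ContinuousEvalConst.continuous_eval_const 0)
        continuous_const).inter
        (isClosed_eq (ContinuousEvalConst.continuous_eval_const 1) continuous_const)
  exact h.polishSpace

instance Stmt13Aux.polishCII : PolishSpace C(I × I, X) := by
  letI := TopologicalSpace.upgradeIsCompletelyMetrizable X
  infer_instance

/-- The path-homotopy relation, as a subset of the square of the loop space, is an
analytic set: it is the continuous image of the Polish space of homotopies. -/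
theorem Stmt13Aux.analytic_homRel (x : X) :
    MeasureTheory.AnalyticSet {p : Path x x × Path x x | Path.Homotopic p.1 p.2} := by
  letI := TopologicalSpace.upgradeIsCompletelyMetrizable X
  set T : Set C(I × I, X) :=
    {F | (∀ s, F (s, 0) = x) ∧ (∀ s, F (s, 1) = x)} with hT
  have key : ∀ c : I, IsClosed {F : C(I × I, X) | ∀ s, F (s, c) = x} := by
    intro c
    rw [Set.setOf_forall]
    exact isClosed_iInter fun s => isClosed_eq
      (ContinuousEvalConst.continuous_eval_const _) continuous_const
  have hTclosed : IsClosed T := by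
    rw [hT, Set.setOf_and]; exact (key 0).inter (key 1)
  haveI : PolishSpace T := hTclosed.polishSpace
  set φ : T → Path x x × Path x x := fun F =>
    (⟨F.1.curry 0, F.2.1 0, F.2.2 0⟩, ⟨F.1.curry 1, F.2.1 1, F.2.2 1⟩) with hφ
  have hcont : Continuous φ := by
    apply Continuous.prodMk <;>
    · apply continuous_induced_rng.2
      exact (ContinuousEvalConst.continuous_eval_const _).comp
        (ContinuousMap.continuous_curry.comp continuous_subtype_val)
  have hrange : Set.range φ = {p : Path x x × Path x x | Path.Homotopic p.1 p.2} := by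
    ext p
    constructor
    · rintro ⟨F, rfl⟩
      refine ⟨⟨⟨F.1, fun t => rfl, fun t => rfl⟩, ?_⟩⟩
      intro t s hs
      rcases hs with hs | hs
      · subst hs; simpa using F.2.1 t
      · simp only [Set.mem_singleton_iff] at hs; subst hs
        simpa using F.2.2 t
    · rintro ⟨H⟩
      refine ⟨⟨H.toContinuousMap, fun s => ?_, fun s => ?_⟩, ?_⟩
      · simpa using H.source s
      · simpa using H.target s
      · have e1 : ∀ t, H (0, t) = p.1 t := fun t => H.apply_zero t
        have e2 : ∀ t, H (1, t) = p.2 t := fun t => H.apply_one t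
        ext1 <;> [skip; skip] <;> ext t
        · exact e1 t
        · exact e2 t
  rw [← hrange]
  exact MeasureTheory.analyticSet_range_of_polishSpace hcont

end Topology

/-! ### Auxiliary group-theoretic facts -/

section GroupTheory

variable {G : Type*} [Group G]

/-- The product `F (k-1) * ⋯ * F 1 * F 0`. -/
def Stmt13Aux.cprod (F : ℕ → G) : ℕ → G
  | 0 => 1
  | k + 1 => F k * Stmt13Aux.cprod F k

theorem Stmt13Aux.mem_commutator_iff_list {g : G} :
    g ∈ commutator G ↔
      ∃ l : List G, (∀ y ∈ l, y ∈ commutatorSet G) ∧ l.prod = g := by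
  constructor
  · intro hg
    rw [commutator_eq_closure] at hg
    induction hg using Subgroup.closure_induction with
    | mem y hy => exact ⟨[y], by simpa using hy, by simp⟩
    | one => exact ⟨[], by simp, by simp⟩
    | mul a b _ _ iha ihb =>
      obtain ⟨la, hla, hpa⟩ := iha
      obtain ⟨lb, hlb, hpb⟩ := ihb
      exact ⟨la ++ lb, by
        intro y hy
        rcases List.mem_append.1 hy with h | h
        exacts [hla y h, hlb y h], by rw [List.prod_append, hpa, hpb]⟩
    | inv a _ iha =>
      obtain ⟨la, hla, hpa⟩ := iha
      refine ⟨(la.map fun y => y⁻¹).reverse, ?_, ?_⟩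
      · intro y hy
        rw [List.mem_reverse, List.mem_map] at hy
        obtain ⟨z, hz, rfl⟩ := hy
        obtain ⟨a', b', rfl⟩ := hla z hz
        exact ⟨b', a', (commutatorElement_inv a' b').symm⟩
      · rw [← List.prod_inv_reverse, hpa]
  · rintro ⟨l, hl, rfl⟩
    rw [commutator_eq_closure]
    induction l with
    | nil => simpa using Subgroup.one_mem _
    | cons a t ih =>
      rw [List.prod_cons]
      exact mul_mem (Subgroup.subset_closure (hl a (List.mem_cons_self)))
        (ih fun y hy => hl y (List.mem_cons_of_mem a hy))

theorem Stmt13Aux.cprod_eq_prod (F : ℕ → G) (k : ℕ) :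
    Stmt13Aux.cprod F k = (((List.range k).map F).reverse).prod := by
  induction k with
  | zero => simp [Stmt13Aux.cprod]
  | succ k ih =>
    rw [Stmt13Aux.cprod, ih, List.range_succ, List.map_append, List.reverse_append]
    simp

theorem Stmt13Aux.list_eq_map_getD (l : List G) :
    (List.range l.length).map (fun i => l.getD i 1) = l := by
  induction l with
  | nil => simp
  | cons a t ih =>
    simp only [List.length_cons, List.range_succ_eq_map, List.map_cons, List.map_map,
      List.getD_cons_zero, Function.comp_def, List.getD_cons_succ]
    rw [ih]

theorem Stmt13Aux.mem_commutator_iff_cprod {g : G} :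
    g ∈ commutator G ↔
      ∃ (k : ℕ) (F : ℕ → G), (∀ i, F i ∈ commutatorSet G) ∧ g = Stmt13Aux.cprod F k := by
  rw [Stmt13Aux.mem_commutator_iff_list]
  constructor
  · rintro ⟨l, hl, rfl⟩
    refine ⟨l.reverse.length, fun i => l.reverse.getD i 1, fun i => ?_, ?_⟩
    · show l.reverse.getD i 1 ∈ _
      rcases lt_or_ge i l.reverse.length with h | h
      · rw [List.getD_eq_getElem _ _ h]
        exact hl _ (List.mem_reverse.1 (List.getElem_mem h))
      · rw [List.getD_eq_default _ _ h]
        exact one_mem_commutatorSet G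
    · rw [Stmt13Aux.cprod_eq_prod, Stmt13Aux.list_eq_map_getD, List.reverse_reverse]
  · rintro ⟨k, F, hF, rfl⟩
    refine ⟨((List.range k).map F).reverse, ?_, (Stmt13Aux.cprod_eq_prod F k).symm⟩
    intro y hy
    rw [List.mem_reverse, List.mem_map] at hy
    obtain ⟨i, _, rfl⟩ := hy
    exact hF i

end GroupTheory

/-! ### `pathClass` as a multiplicative map -/

section PathClass

variable {X : Type} [TopologicalSpace X] {x : X}

theorem Stmt13Aux.pathClass_eq_iff {p q : Path x x} :
    pathClass p = pathClass q ↔ Path.Homotopic p q := by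
  constructor
  · intro h
    exact Quotient.exact h
  · intro h
    exact Quotient.sound h

theorem Stmt13Aux.pathClass_trans (p q : Path x x) :
    pathClass (p.trans q) = pathClass q * pathClass p :=
  rfl

theorem Stmt13Aux.pathClass_refl : pathClass (Path.refl x) = 1 :=
  rfl

theorem Stmt13Aux.pathClass_surjective :
    Function.Surjective (pathClass : Path x x → FundamentalGroup X x) := by
  intro g
  obtain ⟨l, hl⟩ := Quotient.exists_rep (FundamentalGroup.toPath g : Path.Homotopic.Quotient x x)
  exact ⟨l, hl⟩

theorem Stmt13Aux.pathClass_symm (l : Path x x) :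
    pathClass l.symm = (pathClass l)⁻¹ := by
  have h : pathClass l.symm * pathClass l = 1 := by
    rw [← Stmt13Aux.pathClass_trans, ← Stmt13Aux.pathClass_refl,
      Stmt13Aux.pathClass_eq_iff]
    exact ⟨(Path.Homotopy.reflTransSymm l).symm⟩
  exact eq_inv_of_mul_eq_one_left h

/-- The `n`-fold concatenation of a loop with itself. -/
noncomputable def Stmt13Aux.loopPow (l : Path x x) : ℕ → Path x x
  | 0 => Path.refl x
  | n + 1 => (Stmt13Aux.loopPow l n).trans l

theorem Stmt13Aux.pathClass_loopPow (l : Path x x) (n : ℕ) :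
    pathClass (Stmt13Aux.loopPow l n) = pathClass l ^ n := by
  induction n with
  | zero => simpa [Stmt13Aux.loopPow] using Stmt13Aux.pathClass_refl
  | succ n ih =>
    rw [Stmt13Aux.loopPow, Stmt13Aux.pathClass_trans, ih, pow_succ']

theorem Stmt13Aux.continuous_loopPow (n : ℕ) :
    Continuous fun l : Path x x => Stmt13Aux.loopPow l n := by
  induction n with
  | zero => exact continuous_const
  | succ n ih => exact ih.path_trans continuous_id

/-- The loop `a ∗ b ∗ a⁻¹ ∗ b⁻¹`. -/
noncomputable def Stmt13Aux.commLoop (a b : Path x x) : Path x x :=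
  (a.trans b).trans (a.symm.trans b.symm)

open scoped commutatorElement in
theorem Stmt13Aux.pathClass_commLoop (a b : Path x x) :
    pathClass (Stmt13Aux.commLoop a b) = ⁅(pathClass b)⁻¹, (pathClass a)⁻¹⁆ := by
  rw [Stmt13Aux.commLoop, Stmt13Aux.pathClass_trans, Stmt13Aux.pathClass_trans,
    Stmt13Aux.pathClass_trans, Stmt13Aux.pathClass_symm, Stmt13Aux.pathClass_symm,
    commutatorElement_def]
  group

/-- Finite ordered product of a sequence of loops. -/
noncomputable def Stmt13Aux.loopProd (f : ℕ → Path x x) : ℕ → Path x x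
  | 0 => Path.refl x
  | k + 1 => (Stmt13Aux.loopProd f k).trans (f k)

theorem Stmt13Aux.pathClass_loopProd (f : ℕ → Path x x) (k : ℕ) :
    pathClass (Stmt13Aux.loopProd f k) = Stmt13Aux.cprod (fun i => pathClass (f i)) k := by
  induction k with
  | zero => simpa [Stmt13Aux.loopProd, Stmt13Aux.cprod] using Stmt13Aux.pathClass_refl
  | succ k ih =>
    rw [Stmt13Aux.loopProd, Stmt13Aux.pathClass_trans, ih, Stmt13Aux.cprod]

theorem Stmt13Aux.continuous_loopProd {Z : Type*} [TopologicalSpace Z]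
    (h : ℕ → Z → Path x x) (hc : ∀ i, Continuous (h i)) (k : ℕ) :
    Continuous fun z => Stmt13Aux.loopProd (fun i => h i z) k := by
  induction k with
  | zero => exact continuous_const
  | succ k ih => exact ih.path_trans (hc k)

end PathClass

/-- For a path connected Polish space `X` with basepoint `x`, the set of
loops `l` at `x` such that some positive power of the class `[l]` lies in the commutator
subgroup of `π₁(X,x)` is an analytic subset of the loop space.  (This is the loop set of
the kernel of `π₁(X,x) → Ab(X)/tor(Ab(X))`.) -/
theorem stmt13 (X : Type) [TopologicalSpace X] [PolishSpace X] [PathConnectedSpace X]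
    (x : X) :
    MeasureTheory.AnalyticSet {l : Path x x | ∃ n : ℕ, 0 < n ∧
      pathClass l ^ n ∈ commutator (FundamentalGroup X x)} := by
  classical
  open Stmt13Aux in
  -- the continuous "test" maps
  set Ψ : ℕ → ℕ → Path x x × (ℕ → Path x x × Path x x) → Path x x × Path x x :=
    fun n k q => (loopPow q.1 (n + 1),
      loopProd (fun i => commLoop (q.2 i).1 (q.2 i).2) k) with hΨ
  have hΨc : ∀ n k, Continuous (Ψ n k) := by
    intro n k
    apply Continuous.prodMk
    · exact (continuous_loopPow (n + 1)).comp continuous_fst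
    · exact continuous_loopProd _
        (fun i => Continuous.path_trans
          (Continuous.path_trans
            (((continuous_apply i).comp continuous_snd).fst)
            (((continuous_apply i).comp continuous_snd).snd))
          (Continuous.path_trans
            (Path.continuous_symm.comp (((continuous_apply i).comp continuous_snd).fst))
            (Path.continuous_symm.comp (((continuous_apply i).comp continuous_snd).snd)))) k
  -- the homotopy relation is analytic
  have hR := Stmt13Aux.analytic_homRel x
  -- the big analytic set
  have hA : MeasureTheory.AnalyticSet
      (⋃ (n : ℕ) (k : ℕ), Prod.fst ''
        (Ψ n k ⁻¹' {p : Path x x × Path x x | Path.Homotopic p.1 p.2})) := by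
    refine MeasureTheory.AnalyticSet.iUnion fun n =>
      MeasureTheory.AnalyticSet.iUnion fun k => ?_
    exact (hR.preimage (hΨc n k)).image_of_continuous continuous_fst
  convert hA using 1
  ext l
  simp only [Set.mem_setOf_eq, Set.mem_iUnion, Set.mem_image, Set.mem_preimage]
  constructor
  · rintro ⟨n, hn, hmem⟩
    obtain ⟨m, rfl⟩ : ∃ m, n = m + 1 := ⟨n - 1, (Nat.succ_pred_eq_of_pos hn).symm⟩
    rw [mem_commutator_iff_cprod] at hmem
    obtain ⟨k, F, hF, hFe⟩ := hmem
    -- lift each commutator to a pair of loops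
    choose g h hgh using hF
    choose a ha using fun i => pathClass_surjective (x := x) (h i)⁻¹
    choose b hb using fun i => pathClass_surjective (x := x) (g i)⁻¹
    refine ⟨m, k, ⟨l, fun i => (a i, b i)⟩, ?_, rfl⟩
    show Path.Homotopic _ _
    rw [← pathClass_eq_iff]
    rw [pathClass_loopPow, pathClass_loopProd]
    rw [hFe]
    congr 1
    funext i
    rw [pathClass_commLoop, ha, hb, inv_inv, inv_inv, hgh]
  · rintro ⟨n, k, ⟨l', f⟩, hh, rfl⟩
    refine ⟨n + 1, Nat.succ_pos n, ?_⟩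
    have : Path.Homotopic (loopPow l' (n + 1))
        (loopProd (fun i => commLoop (f i).1 (f i).2) k) := hh
    rw [← pathClass_eq_iff] at this
    rw [pathClass_loopPow, pathClass_loopProd] at this
    rw [this, mem_commutator_iff_cprod]
    exact ⟨k, _, fun i => by
      rw [pathClass_commLoop]; exact ⟨_, _, rfl⟩, rfl⟩
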